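/- The linear program: maximize 1ᵀt⁻ + 1ᵀt⁺ subject to δ ≥ 0, 1ᵀδ ≥ 1, Xδ + t⁻ ≤ (1ᵀδ)x₀, Yδ - t⁺ ≥ (1ᵀδ)y₀, 0 ≤ t⁻ ≤ 1, 0 ≤ t⁺ ≤ 1, if feasible, attains its maximum, and at any optimum (δ*, t⁻*, t⁺*), the point (x₀ - t⁻*/σ*, y₀ + t⁺*/σ*) with σ* = 1ᵀδ* lies in Ω₀ and maximizes, over all elements (x₀-s⁻, y₀+s⁺) of Ω₀, the total number of positive components of s⁻ and s⁺. -/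

import Mathlib

/-- Feasibility for system (14). -/
def Feasible {m s k : ℕ} (X : Matrix (Fin m) (Fin k) ℝ) (Y : Matrix (Fin s) (Fin k) ℝ)
    (x₀ : Fin m → ℝ) (y₀ : Fin s → ℝ)
    (δ : Fin k → ℝ) (tm : Fin m → ℝ) (tp : Fin s → ℝ) : Prop :=
  0 ≤ δ ∧ 1 ≤ ∑ j, δ j ∧ X.mulVec δ + tm ≤ (∑ j, δ j) • x₀ ∧
    (∑ j, δ j) • y₀ ≤ Y.mulVec δ - tp ∧ 0 ≤ tm ∧ tm ≤ 1 ∧ 0 ≤ tp ∧ tp ≤ 1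

open Finset

lemma pos_mul_pos_iff {c x : ℝ} (hc : 0 < c) : 0 < c * x ↔ 0 < x := by
  constructor
  · intro h; by_contra hx; push_neg at hx; nlinarith
  · exact fun h => mul_pos hc h

lemma filter_smul_pos {n : ℕ} {c : ℝ} (hc : 0 < c) (t : Fin n → ℝ) :
    (univ.filter fun i => 0 < (c • t) i) = (univ.filter fun i => 0 < t i) := by
  apply filter_congr; intro i _
  simp only [Pi.smul_apply, smul_eq_mul]
  exact_mod_cast pos_mul_pos_iff hc

lemma sum_le_card_pos {n : ℕ} (t : Fin n → ℝ) (h0 : 0 ≤ t) (h1 : t ≤ 1) :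
    ∑ i, t i ≤ ((univ.filter fun i => 0 < t i).card : ℝ) := by
  rw [← Finset.sum_boole]
  apply Finset.sum_le_sum
  intro i _
  by_cases h : 0 < t i
  · simpa [h] using h1 i
  · have ht : t i = 0 := le_antisymm (not_lt.1 h) (h0 i)
    simp [h, ht]

lemma boost {m s k : ℕ} (X : Matrix (Fin m) (Fin k) ℝ) (Y : Matrix (Fin s) (Fin k) ℝ)
    (x₀ : Fin m → ℝ) (y₀ : Fin s → ℝ) (μ : Fin k → ℝ) (sm : Fin m → ℝ) (sp : Fin s → ℝ)
    (hμ0 : 0 ≤ μ) (hμ1 : ∑ j, μ j = 1) (hsm : 0 ≤ sm) (hsp : 0 ≤ sp)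
    (h1 : X.mulVec μ + sm ≤ x₀) (h2 : y₀ ≤ Y.mulVec μ - sp) :
    ∃ δ, Feasible X Y x₀ y₀ δ (fun i => if 0 < sm i then 1 else 0)
      (fun r => if 0 < sp r then 1 else 0) := by
  set A := ∑ i, (if 0 < sm i then (sm i)⁻¹ else 0) with hA
  set B := ∑ r, (if 0 < sp r then (sp r)⁻¹ else 0) with hB
  have hA0 : 0 ≤ A := Finset.sum_nonneg (fun i _ => by split_ifs with h; exacts [inv_nonneg.mpr h.le, le_refl 0])
  have hB0 : 0 ≤ B := Finset.sum_nonneg (fun r _ => by split_ifs with h; exacts [inv_nonneg.mpr h.le, le_refl 0])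
  set L := 1 + A + B with hL
  have hL1 : (1:ℝ) ≤ L := by simp only [hL]; linarith
  have hL0 : (0:ℝ) < L := by linarith
  have hLsm : ∀ i, 0 < sm i → 1 ≤ L * sm i := by
    intro i hi
    have hterm : (sm i)⁻¹ ≤ A := by
      have := Finset.single_le_sum (f := fun i => if 0 < sm i then (sm i)⁻¹ else 0)
        (fun j _ => by split_ifs with h; exacts [inv_nonneg.mpr h.le, le_refl 0]) (Finset.mem_univ i)
      simpa [hi] using this
    have hiL : (sm i)⁻¹ ≤ L := by simp only [hL]; linarith
    calc (1:ℝ) = (sm i)⁻¹ * sm i := (inv_mul_cancel₀ (ne_of_gt hi)).symm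
      _ ≤ L * sm i := mul_le_mul_of_nonneg_right hiL (le_of_lt hi)
  have hLsp : ∀ r, 0 < sp r → 1 ≤ L * sp r := by
    intro r hr
    have hterm : (sp r)⁻¹ ≤ B := by
      have := Finset.single_le_sum (f := fun r => if 0 < sp r then (sp r)⁻¹ else 0)
        (fun j _ => by split_ifs with h; exacts [inv_nonneg.mpr h.le, le_refl 0]) (Finset.mem_univ r)
      simpa [hr] using this
    have hrL : (sp r)⁻¹ ≤ L := by simp only [hL]; linarith
    calc (1:ℝ) = (sp r)⁻¹ * sp r := (inv_mul_cancel₀ (ne_of_gt hr)).symm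
      _ ≤ L * sp r := mul_le_mul_of_nonneg_right hrL (le_of_lt hr)
  have hsum : ∑ j, (L • μ) j = L := by
    simp only [Pi.smul_apply, smul_eq_mul, ← Finset.mul_sum, hμ1, mul_one]
  refine ⟨L • μ, ?_, ?_, ?_, ?_, ?_, ?_, ?_, ?_⟩
  · intro j; simp only [Pi.smul_apply, smul_eq_mul, Pi.zero_apply]
    exact mul_nonneg (le_of_lt hL0) (hμ0 j)
  · rw [hsum]; exact hL1
  · intro i
    simp only [Matrix.mulVec_smul, Pi.add_apply, Pi.smul_apply, smul_eq_mul, ← Finset.mul_sum, hμ1, mul_one]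
    have key : L * (X.mulVec μ i + sm i) ≤ L * x₀ i :=
      mul_le_mul_of_nonneg_left (h1 i) (le_of_lt hL0)
    by_cases h : 0 < sm i
    · have := hLsm i h; simp only [h, if_true]; nlinarith
    · have ht : sm i = 0 := le_antisymm (not_lt.1 h) (hsm i)
      simp only [h, if_false]; nlinarith
  · intro r
    simp only [Matrix.mulVec_smul, Pi.sub_apply, Pi.smul_apply, smul_eq_mul, ← Finset.mul_sum, hμ1, mul_one]
    have key : L * y₀ r ≤ L * (Y.mulVec μ r - sp r) :=
      mul_le_mul_of_nonneg_left (h2 r) (le_of_lt hL0)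
    by_cases h : 0 < sp r
    · have := hLsp r h; simp only [h, if_true]; nlinarith
    · have ht : sp r = 0 := le_antisymm (not_lt.1 h) (hsp r)
      simp only [h, if_false]; nlinarith
  · intro i; by_cases h : 0 < sm i <;> simp [h]
  · intro i; by_cases h : 0 < sm i <;> simp [h]
  · intro r; by_cases h : 0 < sp r <;> simp [h]
  · intro r; by_cases h : 0 < sp r <;> simp [h]

lemma myNormalize {m s k : ℕ} (X : Matrix (Fin m) (Fin k) ℝ) (Y : Matrix (Fin s) (Fin k) ℝ)
    (x₀ : Fin m → ℝ) (y₀ : Fin s → ℝ) {δ : Fin k → ℝ} {tm : Fin m → ℝ} {tp : Fin s → ℝ}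
    (h : Feasible X Y x₀ y₀ δ tm tp) :
    0 < ∑ j, δ j ∧ 0 ≤ (∑ j, δ j)⁻¹ • δ ∧ (∑ j, ((∑ j, δ j)⁻¹ • δ) j) = 1 ∧
      0 ≤ (∑ j, δ j)⁻¹ • tm ∧ 0 ≤ (∑ j, δ j)⁻¹ • tp ∧
      X.mulVec ((∑ j, δ j)⁻¹ • δ) + (∑ j, δ j)⁻¹ • tm ≤ x₀ ∧
      y₀ ≤ Y.mulVec ((∑ j, δ j)⁻¹ • δ) - (∑ j, δ j)⁻¹ • tp := by
  obtain ⟨hδ0, hσ1, h3, h4, htm0, htm1, htp0, htp1⟩ := h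
  set σ := ∑ j, δ j with hσ
  have hσ0 : 0 < σ := lt_of_lt_of_le one_pos hσ1
  have hσi : 0 < σ⁻¹ := inv_pos.mpr hσ0
  have hmul : σ⁻¹ * σ = 1 := inv_mul_cancel₀ (ne_of_gt hσ0)
  refine ⟨hσ0, ?_, ?_, ?_, ?_, ?_, ?_⟩
  · intro j; simp only [Pi.smul_apply, smul_eq_mul, Pi.zero_apply]
    exact mul_nonneg (le_of_lt hσi) (hδ0 j)
  · simp only [Pi.smul_apply, smul_eq_mul, ← Finset.mul_sum, ← hσ, hmul]
  · intro i; simp only [Pi.smul_apply, smul_eq_mul, Pi.zero_apply]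
    exact mul_nonneg (le_of_lt hσi) (htm0 i)
  · intro r; simp only [Pi.smul_apply, smul_eq_mul, Pi.zero_apply]
    exact mul_nonneg (le_of_lt hσi) (htp0 r)
  · intro i
    have h3i : X.mulVec δ i + tm i ≤ σ * x₀ i := by
      have := h3 i; simpa [Pi.smul_apply, smul_eq_mul] using this
    have key : σ⁻¹ * (X.mulVec δ i + tm i) ≤ σ⁻¹ * (σ * x₀ i) :=
      mul_le_mul_of_nonneg_left h3i (le_of_lt hσi)
    rw [mul_add, ← mul_assoc, hmul, one_mul] at key
    simp only [Matrix.mulVec_smul, Pi.add_apply, Pi.smul_apply, smul_eq_mul]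
    linarith
  · intro r
    have h4r : σ * y₀ r ≤ Y.mulVec δ r - tp r := by
      have := h4 r; simpa [Pi.smul_apply, smul_eq_mul] using this
    have key : σ⁻¹ * (σ * y₀ r) ≤ σ⁻¹ * (Y.mulVec δ r - tp r) :=
      mul_le_mul_of_nonneg_left h4r (le_of_lt hσi)
    rw [mul_sub, ← mul_assoc, hmul, one_mul] at key
    simp only [Matrix.mulVec_smul, Pi.sub_apply, Pi.smul_apply, smul_eq_mul]
    linarith

/-- If the LP (15) is feasible it attains its maximum, and at any optimum
`(δ*, t⁻*, t⁺*)`, the point `(x₀ - t⁻*/σ*, y₀ + t⁺*/σ*)` with `σ* = 1ᵀδ*`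
lies in `Ω₀` and maximizes over `Ω₀` the total number of positive slack
components. -/
theorem stmt_7 {m s k : ℕ} (X : Matrix (Fin m) (Fin k) ℝ) (Y : Matrix (Fin s) (Fin k) ℝ)
    (hX : ∀ i j, 0 ≤ X i j) (hY : ∀ i j, 0 ≤ Y i j)
    (x₀ : Fin m → ℝ) (y₀ : Fin s → ℝ) (hx₀ : 0 ≤ x₀) (hy₀ : 0 ≤ y₀)
    (hne : ∃ δ tm tp, Feasible X Y x₀ y₀ δ tm tp) :
    (∃ δ tm tp, Feasible X Y x₀ y₀ δ tm tp ∧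
      ∀ δ' tm' tp', Feasible X Y x₀ y₀ δ' tm' tp' →
        ∑ i, tm' i + ∑ r, tp' r ≤ ∑ i, tm i + ∑ r, tp r) ∧
    (∀ δ tm tp, Feasible X Y x₀ y₀ δ tm tp →
      (∀ δ' tm' tp', Feasible X Y x₀ y₀ δ' tm' tp' →
        ∑ i, tm' i + ∑ r, tp' r ≤ ∑ i, tm i + ∑ r, tp r) →
      let σ := ∑ j, δ j
      (∃ μ : Fin k → ℝ, 0 ≤ μ ∧ ∑ j, μ j = 1 ∧ 0 ≤ σ⁻¹ • tm ∧ 0 ≤ σ⁻¹ • tp ∧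
        X.mulVec μ + σ⁻¹ • tm ≤ x₀ ∧ y₀ ≤ Y.mulVec μ - σ⁻¹ • tp) ∧
      (∀ (μ : Fin k → ℝ) (sm : Fin m → ℝ) (sp : Fin s → ℝ),
        0 ≤ μ → ∑ j, μ j = 1 → 0 ≤ sm → 0 ≤ sp →
        X.mulVec μ + sm ≤ x₀ → y₀ ≤ Y.mulVec μ - sp →
        (Finset.univ.filter fun i => 0 < sm i).card +
          (Finset.univ.filter fun r => 0 < sp r).card ≤
        (Finset.univ.filter fun i => 0 < (σ⁻¹ • tm) i).card +
          (Finset.univ.filter fun r => 0 < (σ⁻¹ • tp) r).card)) := by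
  classical
  -- the "count of positive components" value of a pair of slack vectors
  set v : (Fin m → ℝ) → (Fin s → ℝ) → ℕ := fun tm tp =>
    (univ.filter fun i => 0 < tm i).card + (univ.filter fun r => 0 < tp r).card with hv
  have hvbound : ∀ (tm : Fin m → ℝ) (tp : Fin s → ℝ), v tm tp ≤ m + s := by
    intro tm tp
    have h1 : (univ.filter fun i => 0 < tm i).card ≤ m := by
      simpa using card_filter_le univ (fun i => 0 < tm i)
    have h2 : (univ.filter fun r => 0 < tp r).card ≤ s := by
      simpa using card_filter_le univ (fun r => 0 < tp r)
    simp only [hv]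
    omega
  set P : ℕ → Prop := fun n => ∃ δ tm tp, Feasible X Y x₀ y₀ δ tm tp ∧ v tm tp = n with hPdef
  obtain ⟨δ₀, tm₀, tp₀, hfeas₀⟩ := hne
  have hP0 : P (v tm₀ tp₀) := ⟨δ₀, tm₀, tp₀, hfeas₀, rfl⟩
  set N := Nat.findGreatest P (m + s) with hN
  have hPN : P N := Nat.findGreatest_spec (hvbound tm₀ tp₀) hP0
  have hmaxN : ∀ δ tm tp, Feasible X Y x₀ y₀ δ tm tp → v tm tp ≤ N := by
    intro δ tm tp hf
    exact Nat.le_findGreatest (hvbound tm tp) ⟨δ, tm, tp, hf, rfl⟩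
  -- build an optimal solution with 0/1 slacks from a feasible point attaining N
  obtain ⟨δ₁, tm₁, tp₁, hf₁, hval₁⟩ := hPN
  obtain ⟨hσ₁, hμ₁0, hμ₁1, hsm₁0, hsp₁0, hc₁, hc₂⟩ := myNormalize X Y x₀ y₀ hf₁
  set σ₁ := ∑ j, δ₁ j
  obtain ⟨δs, hfs⟩ := boost X Y x₀ y₀ (σ₁⁻¹ • δ₁) (σ₁⁻¹ • tm₁) (σ₁⁻¹ • tp₁)
    hμ₁0 hμ₁1 hsm₁0 hsp₁0 hc₁ hc₂
  have hσ₁i : 0 < σ₁⁻¹ := inv_pos.mpr hσ₁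
  have hfilm : (univ.filter fun i => 0 < (σ₁⁻¹ • tm₁) i) = (univ.filter fun i => 0 < tm₁ i) :=
    filter_smul_pos hσ₁i tm₁
  have hfilp : (univ.filter fun r => 0 < (σ₁⁻¹ • tp₁) r) = (univ.filter fun r => 0 < tp₁ r) :=
    filter_smul_pos hσ₁i tp₁
  have hsum_s : (∑ i, (if 0 < (σ₁⁻¹ • tm₁) i then (1:ℝ) else 0))
      + (∑ r, (if 0 < (σ₁⁻¹ • tp₁) r then (1:ℝ) else 0)) = (N : ℝ) := by
    rw [Finset.sum_boole, Finset.sum_boole, hfilm, hfilp]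
    rw [← hval₁]
    push_cast [hv]
    ring
  constructor
  · -- existence of an optimum
    refine ⟨δs, _, _, hfs, ?_⟩
    intro δ' tm' tp' hf'
    obtain ⟨_, _, _, _, htm'0, htm'1, htp'0, htp'1⟩ := hf'
    have hb1 : ∑ i, tm' i ≤ ((univ.filter fun i => 0 < tm' i).card : ℝ) :=
      sum_le_card_pos tm' htm'0 htm'1
    have hb2 : ∑ r, tp' r ≤ ((univ.filter fun r => 0 < tp' r).card : ℝ) :=
      sum_le_card_pos tp' htp'0 htp'1
    have hN' : v tm' tp' ≤ N := hmaxN δ' tm' tp' ⟨‹_›, ‹_›, ‹_›, ‹_›, htm'0, htm'1, htp'0, htp'1⟩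
    have hNr : ((v tm' tp' : ℕ) : ℝ) ≤ (N : ℝ) := Nat.cast_le.mpr hN'
    have hvcast : ((v tm' tp' : ℕ) : ℝ)
        = ((univ.filter fun i => 0 < tm' i).card : ℝ) +
          ((univ.filter fun r => 0 < tp' r).card : ℝ) := by push_cast [hv]; ring
    rw [hsum_s]
    linarith [hvcast ▸ hNr]
  · -- optimality of the normalized point
    intro δ tm tp hf hopt σ
    obtain ⟨hσ0, hμ0, hμ1, hsm0, hsp0, hc1, hc2⟩ := myNormalize X Y x₀ y₀ hf
    have hσi : 0 < σ⁻¹ := inv_pos.mpr hσ0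
    refine ⟨⟨σ⁻¹ • δ, hμ0, hμ1, hsm0, hsp0, hc1, hc2⟩, ?_⟩
    intro μ sm sp hμ0' hμ1' hsm' hsp' h1' h2'
    obtain ⟨δ'', hf''⟩ := boost X Y x₀ y₀ μ sm sp hμ0' hμ1' hsm' hsp' h1' h2'
    have hopt'' := hopt δ'' _ _ hf''
    obtain ⟨_, _, _, _, htm0, htm1, htp0, htp1⟩ := hf
    have hsum'' : (∑ i, (if 0 < sm i then (1:ℝ) else 0))
        + (∑ r, (if 0 < sp r then (1:ℝ) else 0))
        = (((univ.filter fun i => 0 < sm i).card : ℝ) +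
           ((univ.filter fun r => 0 < sp r).card : ℝ)) := by
      rw [Finset.sum_boole, Finset.sum_boole]
    have hb1 : ∑ i, tm i ≤ ((univ.filter fun i => 0 < tm i).card : ℝ) :=
      sum_le_card_pos tm htm0 htm1
    have hb2 : ∑ r, tp r ≤ ((univ.filter fun r => 0 < tp r).card : ℝ) :=
      sum_le_card_pos tp htp0 htp1
    have hfilm' : (univ.filter fun i => 0 < (σ⁻¹ • tm) i) = (univ.filter fun i => 0 < tm i) :=
      filter_smul_pos hσi tm
    have hfilp' : (univ.filter fun r => 0 < (σ⁻¹ • tp) r) = (univ.filter fun r => 0 < tp r) :=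
      filter_smul_pos hσi tp
    rw [hfilm', hfilp']
    have hcast : (((univ.filter fun i => 0 < sm i).card : ℝ) +
           ((univ.filter fun r => 0 < sp r).card : ℝ))
        ≤ (((univ.filter fun i => 0 < tm i).card : ℝ) +
           ((univ.filter fun r => 0 < tp r).card : ℝ)) := by
      rw [← hsum'']
      calc _ ≤ ∑ i, tm i + ∑ r, tp r := hopt''
        _ ≤ _ := by linarith
    exact_mod_cast hcast
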